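/- Let X and Y be real Banach spaces with the approximation property, let k ∈ ℕ, and let (𝒩_{N,N'}) be a family of finite-dimensional approximators with the C^k compact-open density property. Then for every k-times continuously Fréchet differentiable map F : X → Y, all compact sets K, K' ⊆ X, and every ε > 0, there exist N, N' ∈ ℕ, a continuous linear map E : X → ℝ^N, a continuous linear map D : ℝ^{N'} → Y, and f ∈ 𝒩_{N,N'} such that for every 0 ≤ i ≤ k: sup_{x ∈ K, h^1, …, h^i ∈ K'} ‖D^i F(x)(h^1, …, h^i) − D^i(D ∘ f ∘ E)(x)(h^1, …, h^i)‖_Y < ε. -/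

import Mathlib

open MeasureTheory
open scoped Topology ENNReal NNReal

/-- Uniform continuity near a compact set (metric version). -/
lemma my_unif_on_compact {α β : Type*} [PseudoMetricSpace α] [PseudoMetricSpace β]
    {s : Set α} (hs : IsCompact s) {f : α → β} (hf : Continuous f)
    {ε : ℝ} (hε : 0 < ε) :
    ∃ δ > 0, ∀ x ∈ s, ∀ y, dist x y < δ → dist (f x) (f y) < ε := by
  have h := hs.uniformContinuousAt_of_continuousAt f (fun a _ => hf.continuousAt)
    (Metric.dist_mem_uniformity hε)
  rw [Metric.mem_uniformity_dist] at h
  obtain ⟨δ, hδ, hδ'⟩ := h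
  exact ⟨δ, hδ, fun x hx y hxy => hδ' hxy hx⟩

/-- Uniform continuity of all iterated derivatives up to order `k` near a compact set. -/
lemma my_unif_all {X Y : Type*} [NormedAddCommGroup X] [NormedSpace ℝ X]
    [NormedAddCommGroup Y] [NormedSpace ℝ Y] (k : ℕ) {K : Set X} (hK : IsCompact K)
    {ε : ℝ} (hε : 0 < ε) :
    ∀ {F : X → Y}, ContDiff ℝ k F →
    ∃ δ > 0, ∀ i ≤ k, ∀ x ∈ K, ∀ y, dist x y < δ →
      ‖iteratedFDeriv ℝ i F x - iteratedFDeriv ℝ i F y‖ < ε := by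
  induction k with
  | zero =>
    intro F hF
    obtain ⟨δ, hδ, h⟩ := my_unif_on_compact hK
      (hF.continuous_iteratedFDeriv (m := 0) (by norm_num)) hε
    refine ⟨δ, hδ, fun i hi x hx y hxy => ?_⟩
    interval_cases i
    simpa [dist_eq_norm] using h x hx y hxy
  | succ n IH =>
    intro F hF
    obtain ⟨δ₁, hδ₁, h₁⟩ := IH (hF.of_le (by exact_mod_cast Nat.le_succ n))
    obtain ⟨δ₂, hδ₂, h₂⟩ := my_unif_on_compact hK
      (hF.continuous_iteratedFDeriv (m := n + 1) le_rfl) hε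
    refine ⟨min δ₁ δ₂, lt_min hδ₁ hδ₂, fun i hi x hx y hxy => ?_⟩
    rcases Nat.lt_succ_iff_lt_or_eq.1 (Nat.lt_succ_of_le hi) with h | h
    · exact h₁ i (Nat.lt_succ_iff.1 h) x hx y (hxy.trans_le (min_le_left _ _))
    · subst h
      simpa [dist_eq_norm] using h₂ x hx y (hxy.trans_le (min_le_right _ _))

/-- Bound on all iterated derivatives up to order `k` on a compact set. -/
lemma my_bound_all {X Y : Type*} [NormedAddCommGroup X] [NormedSpace ℝ X]
    [NormedAddCommGroup Y] [NormedSpace ℝ Y] (k : ℕ) {K : Set X} (hK : IsCompact K) :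
    ∀ {F : X → Y}, ContDiff ℝ k F →
    ∃ B : ℝ, ∀ i ≤ k, ∀ x ∈ K, ‖iteratedFDeriv ℝ i F x‖ ≤ B := by
  induction k with
  | zero =>
    intro F hF
    obtain ⟨B, hB⟩ := hK.exists_bound_of_continuousOn
      ((hF.continuous_iteratedFDeriv (m := 0) (by norm_num)).continuousOn)
    refine ⟨B, fun i hi x hx => ?_⟩
    interval_cases i
    exact hB x hx
  | succ n IH =>
    intro F hF
    obtain ⟨B₁, h₁⟩ := IH (hF.of_le (by exact_mod_cast Nat.le_succ n))
    obtain ⟨B₂, h₂⟩ := hK.exists_bound_of_continuousOn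
      ((hF.continuous_iteratedFDeriv (m := n + 1) le_rfl).continuousOn)
    refine ⟨max B₁ B₂, fun i hi x hx => ?_⟩
    rcases Nat.lt_succ_iff_lt_or_eq.1 (Nat.lt_succ_of_le hi) with h | h
    · exact (h₁ i (Nat.lt_succ_iff.1 h) x hx).trans (le_max_left _ _)
    · subst h; exact (h₂ x hx).trans (le_max_right _ _)

/-- Iterated derivative of `A ∘ f ∘ B` with `A`, `B` continuous linear. -/
lemma my_iter_comp {X G H Y : Type*} [NormedAddCommGroup X] [NormedSpace ℝ X]
    [NormedAddCommGroup G] [NormedSpace ℝ G] [NormedAddCommGroup H] [NormedSpace ℝ H]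
    [NormedAddCommGroup Y] [NormedSpace ℝ Y]
    (k : ℕ) (A : H →L[ℝ] Y) {f : G → H} (B : X →L[ℝ] G) (hf : ContDiff ℝ k f)
    {i : ℕ} (hi : i ≤ k) (x : X) (v : Fin i → X) :
    iteratedFDeriv ℝ i (fun z => A (f (B z))) x v
      = A (iteratedFDeriv ℝ i f (B x) (fun j => B (v j))) := by
  have e1 : (fun z => A (f (B z))) = A ∘ (f ∘ B) := rfl
  rw [e1, A.iteratedFDeriv_comp_left ((hf.comp B.contDiff).contDiffAt (x := x)) (by exact_mod_cast hi)]
  rw [ContinuousLinearMap.compContinuousMultilinearMap_coe]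
  simp only [Function.comp_apply]
  congr 1
  rw [B.iteratedFDeriv_comp_right hf x (by exact_mod_cast hi)]
  rfl

/-- Iterated derivative of `f ∘ B` with `B` continuous linear. -/
lemma my_iter_comp_right {X G H : Type*} [NormedAddCommGroup X] [NormedSpace ℝ X]
    [NormedAddCommGroup G] [NormedSpace ℝ G] [NormedAddCommGroup H] [NormedSpace ℝ H]
    (k : ℕ) {f : G → H} (B : X →L[ℝ] G) (hf : ContDiff ℝ k f)
    {i : ℕ} (hi : i ≤ k) (x : X) (v : Fin i → X) :
    iteratedFDeriv ℝ i (fun z => f (B z)) x v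
      = iteratedFDeriv ℝ i f (B x) (fun j => B (v j)) := by
  have e1 : (fun z => f (B z)) = f ∘ B := rfl
  rw [e1, B.iteratedFDeriv_comp_right hf x (by exact_mod_cast hi)]
  rfl
/-- A real Banach space `Z` has the approximation property: every compact set can be
uniformly approximated to arbitrary precision by a finite-rank continuous linear operator. -/
def HasApproxProperty (Z : Type*) [NormedAddCommGroup Z] [NormedSpace ℝ Z] : Prop :=
  ∀ K : Set Z, IsCompact K → ∀ ε : ℝ, 0 < ε →
    ∃ S : Z →L[ℝ] Z, FiniteDimensional ℝ (LinearMap.range (S : Z →ₗ[ℝ] Z)) ∧ ∀ z ∈ K, ‖z - S z‖ < ε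

set_option maxHeartbeats 2000000 in
/-- universal approximation in the `C^k_B` compact-open topology via
encoder-decoder architectures, for Banach spaces `X`, `Y` with the approximation property
and a family of finite-dimensional approximators with the `C^k` compact-open density
property. -/
theorem stmt_2 {X Y : Type*} [NormedAddCommGroup X] [NormedSpace ℝ X] [CompleteSpace X]
    [NormedAddCommGroup Y] [NormedSpace ℝ Y] [CompleteSpace Y]
    (hX : HasApproxProperty X) (hY : HasApproxProperty Y) (k : ℕ)
    (𝒩 : (N N' : ℕ) → Set ((Fin N → ℝ) → (Fin N' → ℝ)))
    (h𝒩smooth : ∀ N N', ∀ f ∈ 𝒩 N N', ContDiff ℝ k f)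
    (h𝒩dense : ∀ (N N' : ℕ) (g : (Fin N → ℝ) → (Fin N' → ℝ)), ContDiff ℝ k g →
      ∀ C : Set (Fin N → ℝ), IsCompact C → ∀ ε : ℝ, 0 < ε →
      ∃ f ∈ 𝒩 N N', ∀ i ≤ k, ∀ y ∈ C,
        ‖iteratedFDeriv ℝ i g y - iteratedFDeriv ℝ i f y‖ < ε)
    (F : X → Y) (hF : ContDiff ℝ k F)
    (K K' : Set X) (hK : IsCompact K) (hK' : IsCompact K')
    (ε : ℝ) (hε : 0 < ε) :
    ∃ (N N' : ℕ) (E : X →L[ℝ] (Fin N → ℝ)) (D : (Fin N' → ℝ) →L[ℝ] Y)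
      (f : (Fin N → ℝ) → (Fin N' → ℝ)), f ∈ 𝒩 N N' ∧
      ∀ i ≤ k, ∀ x ∈ K, ∀ h : Fin i → X, (∀ j, h j ∈ K') →
        ‖iteratedFDeriv ℝ i F x h -
          iteratedFDeriv ℝ i (fun z : X => D (f (E z))) x h‖ < ε := by
  classical
  have hhalf : ∀ (a r : ℝ), r ≠ 0 → r * (a / (2 * r)) = a / 2 := by
    intro a r hr; field_simp
  have hhalf' : ∀ (a r : ℝ), r ≠ 0 → (a / (2 * r)) * r = a / 2 := by
    intro a r hr; field_simp
  set ε4 : ℝ := ε / 4 with hε4def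
  have hε4 : 0 < ε4 := by positivity
  -- bound on K'
  obtain ⟨M₀, hM₀⟩ := hK'.exists_bound_of_continuousOn continuous_id.continuousOn
  set Mb : ℝ := max M₀ 0 + 2 with hMbdef
  have hMb1 : (1:ℝ) ≤ Mb := by
    have : (0:ℝ) ≤ max M₀ 0 := le_max_right _ _
    linarith
  have hMb0 : (0:ℝ) < Mb := lt_of_lt_of_le one_pos hMb1
  have hK'Mb : ∀ z ∈ K', ‖z‖ ≤ Mb - 1 := by
    intro z hz
    have := hM₀ z hz
    have h2 : M₀ ≤ max M₀ 0 := le_max_left _ _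
    simp only [id_eq] at this
    linarith
  -- bound on derivatives over K
  obtain ⟨C₀, hC₀⟩ := my_bound_all k hK hF
  set C1 : ℝ := max C₀ 0 + 1 with hC1def
  have hC10 : (0:ℝ) < C1 := by
    have : (0:ℝ) ≤ max C₀ 0 := le_max_right _ _
    linarith
  have hC1 : ∀ i ≤ k, ∀ x ∈ K, ‖iteratedFDeriv ℝ i F x‖ ≤ C1 := by
    intro i hi x hx
    have := hC₀ i hi x hx
    have h2 : C₀ ≤ max C₀ 0 := le_max_left _ _
    linarith
  -- uniform continuity of the derivatives
  have hMbk : (0:ℝ) < Mb ^ k := pow_pos hMb0 k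
  set ε₂ : ℝ := min 1 (ε4 / (2 * Mb ^ k)) with hε₂def
  have hε₂0 : 0 < ε₂ := lt_min one_pos (by positivity)
  obtain ⟨δu, hδu, hδu'⟩ := my_unif_all k hK hε₂0 hF
  -- choice of δ
  set R : ℝ := (C1 + 1) * (k + 1) * Mb ^ k with hRdef
  have hR0 : 0 < R := by positivity
  set δ : ℝ := min (min δu 1) (ε4 / (2 * R)) with hδdef
  have hδ0 : 0 < δ := lt_min (lt_min hδu one_pos) (by positivity)
  have hδ1 : δ ≤ 1 := le_trans (min_le_left _ _) (min_le_right _ _)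
  have hδu2 : δ ≤ δu := le_trans (min_le_left _ _) (min_le_left _ _)
  have hδR : δ ≤ ε4 / (2 * R) := min_le_right _ _
  -- apply the approximation property of X
  obtain ⟨P, hPfin, hP⟩ := hX (K ∪ K') (hK.union hK') δ hδ0
  haveI : FiniteDimensional ℝ (LinearMap.range (P : X →ₗ[ℝ] X)) := hPfin
  set V := LinearMap.range (P : X →ₗ[ℝ] X) with hVdef
  let e : V ≃L[ℝ] (Fin (Module.finrank ℝ V) → ℝ) :=
    (Module.finBasis ℝ V).equivFun.toContinuousLinearEquiv
  let P' : X →L[ℝ] V := P.codRestrict V (fun z => LinearMap.mem_range_self _ z)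
  let E : X →L[ℝ] (Fin (Module.finrank ℝ V) → ℝ) := e.toContinuousLinearMap.comp P'
  let J : (Fin (Module.finrank ℝ V) → ℝ) →L[ℝ] X := V.subtypeL.comp e.symm.toContinuousLinearMap
  have hJE : ∀ z : X, J (E z) = P z := by
    intro z
    simp [J, E, P']
  -- compact set of values in Y
  let CYs : ℕ → Set Y := fun i =>
    (fun p : X × (Fin i → X) => iteratedFDeriv ℝ i F (P p.1) (fun j => P (p.2 j))) ''
      (K ×ˢ Set.univ.pi fun _ => K')
  have hCYs : ∀ i ≤ k, IsCompact (CYs i) := by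
    intro i hi
    have hc1 : Continuous fun p : X × (Fin i → X) => iteratedFDeriv ℝ i F (P p.1) :=
      (hF.continuous_iteratedFDeriv (by exact_mod_cast hi)).comp
        (P.continuous.comp continuous_fst)
    have hc2 : Continuous fun p : X × (Fin i → X) => (fun j => P (p.2 j)) :=
      continuous_pi fun j => P.continuous.comp ((continuous_apply j).comp continuous_snd)
    exact (hK.prod (isCompact_univ_pi fun _ => hK')).image
      (continuous_eval.comp (hc1.prodMk hc2))
  set CY : Set Y := ⋃ i ∈ Finset.range (k + 1), CYs i with hCYdef
  have hCY : IsCompact CY :=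
    (Finset.range (k + 1)).isCompact_biUnion fun i hi =>
      hCYs i (Nat.lt_succ_iff.1 (Finset.mem_range.1 hi))
  -- apply the approximation property of Y
  obtain ⟨T, hTfin, hT⟩ := hY CY hCY ε4 hε4
  haveI : FiniteDimensional ℝ (LinearMap.range (T : Y →ₗ[ℝ] Y)) := hTfin
  set W := LinearMap.range (T : Y →ₗ[ℝ] Y) with hWdef
  let e' : W ≃L[ℝ] (Fin (Module.finrank ℝ W) → ℝ) :=
    (Module.finBasis ℝ W).equivFun.toContinuousLinearEquiv
  let T' : Y →L[ℝ] W := T.codRestrict W (fun z => LinearMap.mem_range_self _ z)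
  let S : Y →L[ℝ] (Fin (Module.finrank ℝ W) → ℝ) := e'.toContinuousLinearMap.comp T'
  let D : (Fin (Module.finrank ℝ W) → ℝ) →L[ℝ] Y := W.subtypeL.comp e'.symm.toContinuousLinearMap
  have hDS : ∀ y : Y, D (S y) = T y := by
    intro y
    simp [D, S, T']
  -- finite-dimensional map g and its neural approximation f
  let g : (Fin (Module.finrank ℝ V) → ℝ) → (Fin (Module.finrank ℝ W) → ℝ) :=
    fun y => S (F (J y))
  have hg : ContDiff ℝ k g := S.contDiff.comp (hF.comp J.contDiff)
  set Q : ℝ := (‖E‖ + 1) * Mb with hQdef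
  have hQ1 : (1:ℝ) ≤ Q := by
    have h1 : (1:ℝ) ≤ ‖E‖ + 1 := by linarith [norm_nonneg E]
    calc (1:ℝ) = 1 * 1 := by ring
    _ ≤ (‖E‖ + 1) * Mb := by
        apply mul_le_mul h1 hMb1 zero_le_one (by positivity)
  have hQ0 : (0:ℝ) < Q := lt_of_lt_of_le one_pos hQ1
  have hQk : (0:ℝ) < Q ^ k := pow_pos hQ0 k
  set η : ℝ := ε4 / ((‖D‖ + 1) * Q ^ k) with hηdef
  have hη0 : 0 < η := by positivity
  obtain ⟨f, hf𝒩, hfapp⟩ := h𝒩dense _ _ g hg (E '' K) (hK.image E.continuous) η hη0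
  refine ⟨_, _, E, D, f, hf𝒩, ?_⟩
  intro i hi x hx h hh
  -- norms of directions
  have hhMb : ∀ j, ‖h j‖ ≤ Mb := fun j => le_trans (hK'Mb _ (hh j)) (by linarith)
  have hPclose : ∀ z ∈ K ∪ K', ‖z - P z‖ < δ := hP
  have hPh : ∀ j, ‖P (h j)‖ ≤ Mb := by
    intro j
    have h1 := hPclose (h j) (Or.inr (hh j))
    have h2 := hK'Mb _ (hh j)
    calc ‖P (h j)‖ = ‖h j - (h j - P (h j))‖ := by rw [sub_sub_cancel]
    _ ≤ ‖h j‖ + ‖h j - P (h j)‖ := norm_sub_le _ _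
    _ ≤ Mb := by linarith
  -- the key intermediate value
  set B : Y := iteratedFDeriv ℝ i F (P x) (fun j => P (h j)) with hBdef
  have hBmem : B ∈ CY := by
    rw [hCYdef]
    refine Set.mem_biUnion (Finset.mem_range.2 (Nat.lt_succ_of_le hi)) ?_
    exact ⟨(x, h), ⟨hx, fun j _ => hh j⟩, rfl⟩
  -- rewriting of the iterated derivatives
  have hG : iteratedFDeriv ℝ i (fun z : X => D (f (E z))) x h
      = D (iteratedFDeriv ℝ i f (E x) (fun j => E (h j))) :=
    my_iter_comp k D E (h𝒩smooth _ _ f hf𝒩) hi x h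
  have hgB : iteratedFDeriv ℝ i g (E x) (fun j => E (h j)) = S B := by
    have h1 := my_iter_comp k S J hF hi (E x) (fun j => E (h j))
    rw [hBdef]
    have h2 : (fun y => S (F (J y))) = g := rfl
    rw [h2] at h1
    rw [h1, hJE x]
    have h3 : (fun j => J (E (h j))) = fun j => P (h j) := funext fun j => hJE (h j)
    rw [h3]
  -- term 1 : changing x to P x and h to P ∘ h
  have hxP : dist x (P x) < δ := by
    rw [dist_eq_norm]; exact hPclose x (Or.inl hx)
  have hxPu : ‖iteratedFDeriv ℝ i F x - iteratedFDeriv ℝ i F (P x)‖ < ε₂ :=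
    hδu' i hi x hx (P x) (lt_of_lt_of_le hxP hδu2)
  have hprodh : ∀ (v : Fin i → X), (∀ j, ‖v j‖ ≤ Mb) → ∏ j, ‖v j‖ ≤ Mb ^ k := by
    intro v hv
    calc ∏ j, ‖v j‖ ≤ ∏ _j : Fin i, Mb :=
          Finset.prod_le_prod (fun j _ => norm_nonneg _) (fun j _ => hv j)
    _ = Mb ^ i := by simp
    _ ≤ Mb ^ k := pow_le_pow_right₀ hMb1 hi
  have hT1 : ‖iteratedFDeriv ℝ i F x h - B‖ ≤ ε4 := by
    have split : iteratedFDeriv ℝ i F x h - B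
        = (iteratedFDeriv ℝ i F x - iteratedFDeriv ℝ i F (P x)) h
          + (iteratedFDeriv ℝ i F (P x) h - iteratedFDeriv ℝ i F (P x) (fun j => P (h j))) := by
      rw [hBdef]
      simp [ContinuousMultilinearMap.sub_apply]
    have e1 : ‖(iteratedFDeriv ℝ i F x - iteratedFDeriv ℝ i F (P x)) h‖ ≤ ε4 / 2 := by
      calc ‖(iteratedFDeriv ℝ i F x - iteratedFDeriv ℝ i F (P x)) h‖
          ≤ ‖iteratedFDeriv ℝ i F x - iteratedFDeriv ℝ i F (P x)‖ * ∏ j, ‖h j‖ :=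
            ContinuousMultilinearMap.le_opNorm _ _
      _ ≤ ε₂ * Mb ^ k := by
            apply mul_le_mul hxPu.le (hprodh h hhMb)
              (Finset.prod_nonneg fun j _ => norm_nonneg _) hε₂0.le
      _ ≤ (ε4 / (2 * Mb ^ k)) * Mb ^ k := by
            apply mul_le_mul_of_nonneg_right (min_le_right _ _) hMbk.le
      _ = ε4 / 2 := hhalf' ε4 (Mb ^ k) hMbk.ne'
    have e2 : ‖iteratedFDeriv ℝ i F (P x) h - iteratedFDeriv ℝ i F (P x) (fun j => P (h j))‖
        ≤ ε4 / 2 := by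
      have hnorm : ‖iteratedFDeriv ℝ i F (P x)‖ ≤ C1 + 1 := by
        have h1 := hC1 i hi x hx
        calc ‖iteratedFDeriv ℝ i F (P x)‖
            = ‖iteratedFDeriv ℝ i F x - (iteratedFDeriv ℝ i F x - iteratedFDeriv ℝ i F (P x))‖ := by
              congr 1; abel
        _ ≤ ‖iteratedFDeriv ℝ i F x‖ + ‖iteratedFDeriv ℝ i F x - iteratedFDeriv ℝ i F (P x)‖ :=
              norm_sub_le _ _
        _ ≤ C1 + 1 := by
              have := min_le_left (1:ℝ) (ε4 / (2 * Mb ^ k))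
              linarith [hxPu, this]
      have hmax : max ‖h‖ ‖fun j => P (h j)‖ ≤ Mb := by
        apply max_le
        · exact (pi_norm_le_iff_of_nonneg hMb0.le).2 hhMb
        · exact (pi_norm_le_iff_of_nonneg hMb0.le).2 hPh
      have hsub : ‖h - fun j => P (h j)‖ ≤ δ := by
        apply (pi_norm_le_iff_of_nonneg hδ0.le).2
        intro j
        simpa using (hPclose (h j) (Or.inr (hh j))).le
      calc ‖iteratedFDeriv ℝ i F (P x) h - iteratedFDeriv ℝ i F (P x) (fun j => P (h j))‖
          ≤ ‖iteratedFDeriv ℝ i F (P x)‖ * (Fintype.card (Fin i))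
              * max ‖h‖ ‖fun j => P (h j)‖ ^ (Fintype.card (Fin i) - 1)
              * ‖h - fun j => P (h j)‖ :=
            ContinuousMultilinearMap.norm_image_sub_le _ _ _
      _ ≤ (C1 + 1) * (k + 1) * Mb ^ k * δ := by
            have hc : (Fintype.card (Fin i) : ℝ) ≤ (k + 1 : ℝ) := by
              simp only [Fintype.card_fin]
              exact_mod_cast Nat.le_succ_of_le hi
            have hp : max ‖h‖ ‖fun j => P (h j)‖ ^ (Fintype.card (Fin i) - 1) ≤ Mb ^ k := by
              calc max ‖h‖ ‖fun j => P (h j)‖ ^ (Fintype.card (Fin i) - 1)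
                  ≤ Mb ^ (Fintype.card (Fin i) - 1) :=
                    pow_le_pow_left₀ (le_max_of_le_left (norm_nonneg _)) hmax _
              _ ≤ Mb ^ k := by
                    apply pow_le_pow_right₀ hMb1
                    simp only [Fintype.card_fin]
                    omega
            apply mul_le_mul ?_ hsub (norm_nonneg _) (by positivity)
            apply mul_le_mul ?_ hp (by positivity) (by positivity)
            exact mul_le_mul hnorm hc (by positivity) (by linarith)
      _ = R * δ := by rw [hRdef]
      _ ≤ R * (ε4 / (2 * R)) := mul_le_mul_of_nonneg_left hδR hR0.le
      _ = ε4 / 2 := hhalf ε4 R hR0.ne'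
    calc ‖iteratedFDeriv ℝ i F x h - B‖
        ≤ ‖(iteratedFDeriv ℝ i F x - iteratedFDeriv ℝ i F (P x)) h‖
          + ‖iteratedFDeriv ℝ i F (P x) h - iteratedFDeriv ℝ i F (P x) (fun j => P (h j))‖ := by
          rw [split]; exact norm_add_le _ _
    _ ≤ ε4 := by linarith
  -- term 2
  have hT2 : ‖B - T B‖ < ε4 := hT B hBmem
  -- term 3
  have hT3 : ‖T B - D (iteratedFDeriv ℝ i f (E x) (fun j => E (h j)))‖ ≤ ε4 := by
    have hTB : T B = D (iteratedFDeriv ℝ i g (E x) (fun j => E (h j))) := by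
      rw [hgB, hDS]
    rw [hTB, ← map_sub]
    have happ : iteratedFDeriv ℝ i g (E x) (fun j => E (h j))
        - iteratedFDeriv ℝ i f (E x) (fun j => E (h j))
        = (iteratedFDeriv ℝ i g (E x) - iteratedFDeriv ℝ i f (E x)) (fun j => E (h j)) := by
      simp [ContinuousMultilinearMap.sub_apply]
    rw [happ]
    have hdiff : ‖iteratedFDeriv ℝ i g (E x) - iteratedFDeriv ℝ i f (E x)‖ ≤ η :=
      (hfapp i hi (E x) ⟨x, hx, rfl⟩).le
    have hprodE : ∏ j, ‖E (h j)‖ ≤ Q ^ k := by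
      calc ∏ j, ‖E (h j)‖ ≤ ∏ _j : Fin i, Q := by
            apply Finset.prod_le_prod (fun j _ => norm_nonneg _)
            intro j _
            calc ‖E (h j)‖ ≤ ‖E‖ * ‖h j‖ := E.le_opNorm _
            _ ≤ (‖E‖ + 1) * Mb := by
                  apply mul_le_mul (by linarith) (hhMb j) (norm_nonneg _) (by positivity)
            _ = Q := rfl
      _ = Q ^ i := by simp
      _ ≤ Q ^ k := pow_le_pow_right₀ hQ1 hi
    calc ‖D ((iteratedFDeriv ℝ i g (E x) - iteratedFDeriv ℝ i f (E x)) (fun j => E (h j)))‖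
        ≤ ‖D‖ * ‖(iteratedFDeriv ℝ i g (E x) - iteratedFDeriv ℝ i f (E x)) (fun j => E (h j))‖ :=
          D.le_opNorm _
    _ ≤ ‖D‖ * (‖iteratedFDeriv ℝ i g (E x) - iteratedFDeriv ℝ i f (E x)‖ * ∏ j, ‖E (h j)‖) := by
          apply mul_le_mul_of_nonneg_left (ContinuousMultilinearMap.le_opNorm _ _) (norm_nonneg _)
    _ ≤ ‖D‖ * (η * Q ^ k) := by
          apply mul_le_mul_of_nonneg_left ?_ (norm_nonneg _)
          exact mul_le_mul hdiff hprodE (Finset.prod_nonneg fun j _ => norm_nonneg _) hη0.le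
    _ ≤ (‖D‖ + 1) * (η * Q ^ k) := by
          apply mul_le_mul_of_nonneg_right (by linarith) (by positivity)
    _ = ε4 := by rw [hηdef]; field_simp
  -- conclusion
  rw [hG]
  calc ‖iteratedFDeriv ℝ i F x h - D (iteratedFDeriv ℝ i f (E x) (fun j => E (h j)))‖
      = dist (iteratedFDeriv ℝ i F x h)
          (D (iteratedFDeriv ℝ i f (E x) (fun j => E (h j)))) := (dist_eq_norm _ _).symm
  _ ≤ dist (iteratedFDeriv ℝ i F x h) B + dist B (T B)
      + dist (T B) (D (iteratedFDeriv ℝ i f (E x) (fun j => E (h j)))) := dist_triangle4 _ _ _ _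
  _ < ε := by
      rw [dist_eq_norm, dist_eq_norm, dist_eq_norm]
      rw [hε4def] at hT1 hT2 hT3
      linarith
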